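/- Let φ : [0,∞) → [0,∞) be an upper semicontinuous function with φ(0) = 0 and φ(t) < t for all t > 0. Then there exists a monotonically increasing continuous function ψ : [0,∞) → [0,∞) such that φ(t) ≤ ψ(t) for all t ≥ 0 and ψ(t) < t for all t > 0. -/
import Mathlib


/-- Lemma (Krishna Murthy): an upper semicontinuous `φ : [0,∞) → [0,∞)` with `φ 0 = 0`
and `φ t < t` for `t > 0` is dominated by a monotonically increasing continuous
`ψ : [0,∞) → [0,∞)` with `ψ t < t` for `t > 0`. -/
theorem usc_dominated_by_monotone_continuous
    (φ : ℝ → ℝ)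
    (hφusc : UpperSemicontinuousOn φ (Set.Ici 0))
    (hφnonneg : ∀ t ≥ (0 : ℝ), 0 ≤ φ t)
    (hφ0 : φ 0 = 0)
    (hφlt : ∀ t > (0 : ℝ), φ t < t) :
    ∃ ψ : ℝ → ℝ, MonotoneOn ψ (Set.Ici 0) ∧ ContinuousOn ψ (Set.Ici 0) ∧
      (∀ t ≥ (0 : ℝ), 0 ≤ ψ t) ∧ (∀ t ≥ (0 : ℝ), φ t ≤ ψ t) ∧ (∀ t > (0 : ℝ), ψ t < t) := by
  -- `φ s ≤ s` on `[0,∞)`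
  have hφle : ∀ s ≥ (0:ℝ), φ s ≤ s := by
    intro s hs
    rcases hs.lt_or_eq with h | h
    · exact (hφlt s h).le
    · simp [← h, hφ0]
  -- the inf-convolution sets
  set E : ℝ → Set ℝ := fun t => (fun s => s - φ s + |t - s|) '' Set.Ici 0 with hE
  have hne : ∀ t, (E t).Nonempty := fun t => ⟨_, ⟨0, Set.self_mem_Ici, rfl⟩⟩
  have hmem : ∀ t, ∀ s, 0 ≤ s → s - φ s + |t - s| ∈ E t := fun t s hs => ⟨s, hs, rfl⟩
  have hbdd : ∀ t, BddBelow (E t) := by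
    intro t
    refine ⟨0, ?_⟩
    rintro x ⟨s, hs, rfl⟩
    dsimp only
    have h1 := hφle s hs
    have h2 := abs_nonneg (t - s)
    linarith
  set e : ℝ → ℝ := fun t => sInf (E t) with he
  have he_nonneg : ∀ t, 0 ≤ e t := by
    intro t
    apply le_csInf (hne t)
    rintro x ⟨s, hs, rfl⟩
    dsimp only
    have h1 := hφle s hs
    have h2 := abs_nonneg (t - s)
    linarith
  have he_le : ∀ t, 0 ≤ t → e t ≤ t - φ t := by
    intro t ht
    have h := csInf_le (hbdd t) (hmem t t ht)
    simpa using h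
  -- Lipschitz property of `e`
  have hlip : ∀ a b : ℝ, e a ≤ e b + |a - b| := by
    intro a b
    have h : e a - |a - b| ≤ e b := by
      apply le_csInf (hne b)
      rintro x ⟨s, hs, rfl⟩
      dsimp only
      have h1 : e a ≤ s - φ s + |a - s| := csInf_le (hbdd a) (hmem a s hs)
      have h2 : |a - s| ≤ |a - b| + |b - s| := abs_sub_le a b s
      linarith
    linarith
  have hcont : Continuous e := by
    have : LipschitzWith 1 e := by
      apply LipschitzWith.of_dist_le_mul
      intro a b
      rw [Real.dist_eq, Real.dist_eq, NNReal.coe_one, one_mul, abs_sub_le_iff]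
      constructor
      · have := hlip a b; linarith
      · have h := hlip b a
        have h2 : |b - a| = |a - b| := abs_sub_comm b a
        linarith
    exact this.continuous
  refine ⟨fun t => t - e t, ?_, ?_, ?_, ?_, ?_⟩
  · -- monotone
    intro a ha b hb hab
    have h := hlip b a
    have h2 : |b - a| = b - a := abs_of_nonneg (by linarith)
    simp only
    linarith [h2 ▸ h]
  · exact (continuous_id.sub hcont).continuousOn
  · intro t ht
    have h1 := he_le t ht
    have h2 := hφnonneg t ht
    simp only
    linarith
  · intro t ht
    have h1 := he_le t ht
    simp only
    linarith
  · -- strict inequality for t > 0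
    intro t ht
    simp only
    have hyt : φ t < (φ t + t) / 2 := by have := hφlt t ht; linarith
    have hy2 : (φ t + t) / 2 < t := by have := hφlt t ht; linarith
    have husc := hφusc t (Set.mem_Ici.2 ht.le) ((φ t + t) / 2) hyt
    rw [eventually_nhdsWithin_iff, Metric.eventually_nhds_iff] at husc
    obtain ⟨δ, hδ, hδp⟩ := husc
    have key : min δ ((φ t + t) / 2 - φ t) ≤ e t := by
      apply le_csInf (hne t)
      rintro x ⟨s, hs, rfl⟩
      rcases lt_or_ge (|t - s|) δ with hcase | hcase
      · have hds : dist s t < δ := by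
          rw [Real.dist_eq, abs_sub_comm]; exact hcase
        have hφs : φ s < (φ t + t) / 2 := hδp hds hs
        have h1 : t - s ≤ |t - s| := le_abs_self _
        have : (φ t + t) / 2 - φ t ≤ t - (φ t + t) / 2 := by linarith
        calc min δ ((φ t + t) / 2 - φ t) ≤ (φ t + t) / 2 - φ t := min_le_right _ _
          _ ≤ s - φ s + |t - s| := by linarith
      · have h1 := hφle s hs
        calc min δ ((φ t + t) / 2 - φ t) ≤ δ := min_le_left _ _
          _ ≤ s - φ s + |t - s| := by linarith
    have hpos : 0 < min δ ((φ t + t) / 2 - φ t) := lt_min hδ (by linarith)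
    linarith
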